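/- For a simple digraph D on n vertices and 1 ≤ k ≤ n, the failed zero forcing number F(D) equals n − k if and only if the smallest cardinality of any critical set in D is k. -/
import Mathlib


/-- The set of out-neighbors of `v` in the digraph with arc relation `A`. -/
def Nout {V : Type} (A : V → V → Prop) (v : V) : Set V := {w | A v w}

/-- The set of in-neighbors of `v`. -/
def Nin {V : Type} (A : V → V → Prop) (v : V) : Set V := {w | A w v}

/-- One application of the color change rule to the set `S` of filled vertices. -/
def Bstep {V : Type} (A : V → V → Prop) (S : Set V) : Set V :=
  S ∪ {w | ∃ v ∈ S, Nout A v \ S = {w}}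

/-- `S` is a zero forcing set: iterating the color change rule fills all vertices. -/
def IsZFS {V : Type} (A : V → V → Prop) (S : Set V) : Prop :=
  ∃ t, (Bstep A)^[t] S = Set.univ

/-- The failed zero forcing number: the maximum cardinality of a failed zero forcing set. -/
noncomputable def Fnum {V : Type} (A : V → V → Prop) : ℕ :=
  sSup {k | ∃ S : Set V, ¬ IsZFS A S ∧ S.ncard = k}

/-- The zero forcing number: the minimum cardinality of a zero forcing set. -/
noncomputable def Znum {V : Type} (A : V → V → Prop) : ℕ :=
  sInf {k | ∃ S : Set V, IsZFS A S ∧ S.ncard = k}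

/-- `W` is a critical set: `W` is nonempty and no vertex outside `W` has exactly one
out-neighbor in `W`. -/
def IsCritical {V : Type} (A : V → V → Prop) (W : Set V) : Prop :=
  W.Nonempty ∧ ∀ v ∈ Wᶜ, (Nout A v ∩ W).ncard ≠ 1

/-- `D` is a directed cycle: either a single vertex with no arcs, or the vertices can be
cyclically labeled so that the arcs are exactly the consecutive ones. -/
def IsDirectedCycle {V : Type} [Fintype V] (A : V → V → Prop) : Prop :=
  (Fintype.card V = 1 ∧ ∀ u v : V, ¬ A u v) ∨
  (2 ≤ Fintype.card V ∧ ∃ e : ZMod (Fintype.card V) ≃ V,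
      ∀ i j : ZMod (Fintype.card V), A (e i) (e j) ↔ j = i + 1)

set_option linter.unusedSectionVars false
variable {V : Type} [Fintype V] (A : V → V → Prop)

lemma subset_bstep (S : Set V) : S ⊆ Bstep A S := Set.subset_union_left

lemma bstep_mono {S T : Set V} (h : S ⊆ T) : Bstep A S ⊆ Bstep A T := by
  intro x hx
  rcases hx with hx | ⟨v, hv, hvx⟩
  · exact Or.inl (h hx)
  · by_cases hxT : x ∈ T
    · exact Or.inl hxT
    · refine Or.inr ⟨v, h hv, ?_⟩
      apply Set.Subset.antisymm
      · intro y hy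
        have : y ∈ Nout A v \ S := ⟨hy.1, fun hyS => hy.2 (h hyS)⟩
        rwa [hvx] at this
      · intro y hy
        rw [Set.mem_singleton_iff] at hy
        have hxv : y ∈ Nout A v \ S := by rw [hvx, hy]; rfl
        exact ⟨hxv.1, hy ▸ hxT⟩

lemma iter_subset_of_fixed {S T : Set V} (h : S ⊆ T) (hT : Bstep A T = T) :
    ∀ t, (Bstep A)^[t] S ⊆ T := by
  intro t
  induction t with
  | zero => exact h
  | succ n ih =>
    rw [Function.iterate_succ_apply']
    calc Bstep A ((Bstep A)^[n] S) ⊆ Bstep A T := bstep_mono A ih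
    _ = T := hT

lemma subset_iter (S : Set V) (t : ℕ) : S ⊆ (Bstep A)^[t] S := by
  induction t with
  | zero => exact le_refl _
  | succ n ih =>
    rw [Function.iterate_succ_apply']
    exact ih.trans (subset_bstep A _)

lemma exists_fixed (S : Set V) : ∃ t, Bstep A ((Bstep A)^[t] S) = (Bstep A)^[t] S := by
  by_contra h
  push_neg at h
  have key : ∀ t, t ≤ ((Bstep A)^[t] S).ncard := by
    intro t
    induction t with
    | zero => exact Nat.zero_le _
    | succ n ih =>
      have hss : (Bstep A)^[n] S ⊂ (Bstep A)^[n+1] S := by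
        rw [Function.iterate_succ_apply']
        exact HasSubset.Subset.ssubset_of_ne (subset_bstep A _) (Ne.symm (h n))
      have := Set.ncard_lt_ncard hss (Set.toFinite _)
      omega
  have h1 := key (Fintype.card V + 1)
  have h2 : ((Bstep A)^[Fintype.card V + 1] S).ncard ≤ Fintype.card V := by
    have := Set.ncard_le_ncard (Set.subset_univ ((Bstep A)^[Fintype.card V + 1] S))
      (Set.toFinite _)
    rwa [Set.ncard_univ, Nat.card_eq_fintype_card] at this
  omega

lemma not_zfs_iff (S : Set V) :
    ¬ IsZFS A S ↔ ∃ T : Set V, S ⊆ T ∧ Bstep A T = T ∧ T ≠ Set.univ := by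
  constructor
  · intro h
    obtain ⟨t, ht⟩ := exists_fixed A S
    refine ⟨(Bstep A)^[t] S, subset_iter A S t, ht, ?_⟩
    intro heq
    exact h ⟨t, heq⟩
  · rintro ⟨T, hST, hfix, hne⟩ ⟨t, ht⟩
    have := iter_subset_of_fixed A hST hfix t
    rw [ht] at this
    exact hne (Set.univ_subset_iff.mp this)

lemma stalled_iff (T : Set V) :
    (Bstep A T = T ∧ T ≠ Set.univ) ↔ IsCritical A Tᶜ := by
  constructor
  · rintro ⟨hfix, hne⟩
    refine ⟨Set.nonempty_compl.mpr hne, ?_⟩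
    intro v hv hcard
    rw [compl_compl] at hv
    rw [Set.ncard_eq_one] at hcard
    obtain ⟨w, hw⟩ := hcard
    have hwT : w ∈ Bstep A T := Or.inr ⟨v, hv, by rw [Set.diff_eq, hw]⟩
    rw [hfix] at hwT
    have : w ∈ Nout A v ∩ Tᶜ := hw ▸ rfl
    exact this.2 hwT
  · rintro ⟨hne, hcrit⟩
    constructor
    · apply Set.union_eq_self_of_subset_right
      rintro w ⟨v, hv, hvw⟩
      exfalso
      apply hcrit v (by rwa [compl_compl])
      rw [← Set.diff_eq, hvw, Set.ncard_singleton]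
    · intro h
      rw [h, Set.compl_univ] at hne
      exact Set.not_nonempty_empty hne

theorem stmt_3 {V : Type} [Fintype V] (A : V → V → Prop) (hA : Irreflexive A)
    (k : ℕ) (hk1 : 1 ≤ k) (hk2 : k ≤ Fintype.card V) :
    Fnum A = Fintype.card V - k ↔
      IsLeast {m | ∃ W : Set V, IsCritical A W ∧ W.ncard = m} k := by
  classical
  set n := Fintype.card V with hn
  have hVne : Nonempty V := Fintype.card_pos_iff.mp (lt_of_lt_of_le hk1 hk2)
  set M := {m | ∃ W : Set V, IsCritical A W ∧ W.ncard = m} with hM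
  have huniv_crit : IsCritical A (Set.univ : Set V) := ⟨Set.univ_nonempty, by simp⟩
  have hMne : M.Nonempty := ⟨(Set.univ : Set V).ncard, Set.univ, huniv_crit, rfl⟩
  set m0 := sInf M with hm0
  have hm0mem : m0 ∈ M := Nat.sInf_mem hMne
  have hleast : IsLeast M m0 := ⟨hm0mem, fun b hb => Nat.sInf_le hb⟩
  obtain ⟨W0, hW0crit, hW0card⟩ := hm0mem
  have hcompl : ∀ W : Set V, W.ncard + Wᶜ.ncard = n := by
    intro W
    have := Set.ncard_add_ncard_compl W (Set.toFinite _)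
    rwa [Nat.card_eq_fintype_card] at this
  have hm0le : m0 ≤ n := by
    rw [← hW0card]
    have := hcompl W0
    omega
  have hstalled : Bstep A W0ᶜ = W0ᶜ ∧ W0ᶜ ≠ Set.univ := by
    apply (stalled_iff A W0ᶜ).mpr
    rw [compl_compl]
    exact hW0crit
  have hnotzfs : ¬ IsZFS A W0ᶜ :=
    (not_zfs_iff A W0ᶜ).mpr ⟨W0ᶜ, subset_refl _, hstalled.1, hstalled.2⟩
  have hW0ccard : (W0ᶜ).ncard = n - m0 := by
    have := hcompl W0
    omega
  have hbdd : ∀ b ∈ {j | ∃ S : Set V, ¬ IsZFS A S ∧ S.ncard = j}, b ≤ n - m0 := by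
    rintro b ⟨S, hS, rfl⟩
    obtain ⟨T, hST, hfix, hne⟩ := (not_zfs_iff A S).mp hS
    have hcrit : IsCritical A Tᶜ := (stalled_iff A T).mp ⟨hfix, hne⟩
    have h1 : m0 ≤ Tᶜ.ncard := Nat.sInf_le ⟨Tᶜ, hcrit, rfl⟩
    have h2 : S.ncard ≤ T.ncard := Set.ncard_le_ncard hST (Set.toFinite _)
    have h3 := hcompl T
    omega
  have hFnum : Fnum A = n - m0 := by
    apply le_antisymm
    · exact csSup_le ⟨n - m0, W0ᶜ, hnotzfs, hW0ccard⟩ hbdd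
    · exact le_csSup ⟨n - m0, hbdd⟩ ⟨W0ᶜ, hnotzfs, hW0ccard⟩
  constructor
  · intro h
    have heq : m0 = k := by
      rw [hFnum] at h
      omega
    exact heq ▸ hleast
  · intro h
    have heq : k = m0 := h.unique hleast
    rw [hFnum, heq]
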